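/- (Convergence of the inertial PC-algorithm I with bounded-perturbation form, iPC I-2.) Let ν ∈ (0,1), γ ∈ (0,2), and let {α_k} ⊆ [0,1]. Let x^{-1}, x^0 ∈ H and let {x^k}, {y^k}, {β_k} satisfy, for every k ≥ 0, with w^k := x^k + α_k(x^k − x^{k−1}): β_k > 0 with inf_k β_k > 0; y^k = P_C(w^k − β_k F(w^k)); β_k‖F(w^k) − F(y^k)‖ ≤ ν‖w^k − y^k‖; d^k := (w^k − y^k) − β_k(F(w^k) − F(y^k)) ≠ 0; ρ_k := ⟨w^k − y^k, d^k⟩/‖d^k‖²; x^{k+1} = w^k − γ ρ_k d^k. If Σ_{k=0}^∞ α_k‖x^k − x^{k−1}‖ < +∞, then {x^k} converges weakly (i.e., ⟨x^k, u⟩ → ⟨x̂, u⟩ for every u ∈ H) to some point x̂ ∈ SOL(C,F). -/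

import Mathlib

set_option maxHeartbeats 1000000

open RealInnerProductSpace Filter

section Aux
variable {H : Type*} [NormedAddCommGroup H] [InnerProductSpace ℝ H] [CompleteSpace H]

/-- quasi-Fejér sequences converge -/
theorem stmt16_qfejer (a ε : ℕ → ℝ) (ha : ∀ k, 0 ≤ a k) (hε : ∀ k, 0 ≤ ε k)
    (hsum : Summable ε) (hstep : ∀ k, a (k+1) ≤ a k + ε k) :
    ∃ ℓ, Filter.Tendsto a Filter.atTop (nhds ℓ) := by
  set T : ℕ → ℝ := fun k => ∑' j, ε (j + k) with hT
  have hTsum : ∀ k, Summable fun j => ε (j + k) := fun k => (summable_nat_add_iff k).2 hsum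
  have hTnonneg : ∀ k, 0 ≤ T k := fun k => tsum_nonneg (fun j => hε _)
  have hTrec : ∀ k, T k = ε k + T (k+1) := by
    intro k
    have h1 := Summable.tsum_eq_zero_add (hTsum k)
    have e1 : (∑' j, ε (j + k)) = ε (0 + k) + ∑' j, ε (j + 1 + k) := h1
    have e2 : (fun j => ε (j + 1 + k)) = fun j => ε (j + (k+1)) := by
      funext j; ring_nf
    rw [e2] at e1
    simpa using e1
  have hanti : Antitone (fun k => a k + T k) := by
    apply antitone_nat_of_succ_le
    intro k
    have := hstep k
    have := hTrec k
    linarith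
  have hbdd : BddBelow (Set.range (fun k => a k + T k)) := by
    refine ⟨0, ?_⟩
    rintro z ⟨k, rfl⟩
    have := ha k; have := hTnonneg k; dsimp; linarith
  have hconv := tendsto_atTop_ciInf hanti hbdd
  have hT0 : Filter.Tendsto T Filter.atTop (nhds 0) := tendsto_sum_nat_add ε
  refine ⟨(⨅ i, a i + T i) - 0, ?_⟩
  have h2 := hconv.sub hT0
  have : (fun k => a k + T k - T k) = a := by funext k; ring
  rwa [this] at h2

theorem stmt16_cauchy_approx (c : ℕ → H) (M : ℝ) (hM : ∀ j, ‖c j‖ ≤ M) (u : H)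
    (h : ∀ ε > 0, ∃ v : H, ‖u - v‖ < ε ∧ CauchySeq (fun j => ⟪c j, v⟫)) :
    CauchySeq (fun j => ⟪c j, u⟫) := by
  have hM0 : 0 ≤ M := le_trans (norm_nonneg _) (hM 0)
  rw [Metric.cauchySeq_iff]
  intro ε hε
  have hδ : (0:ℝ) < ε / (4*(M+1)) := by positivity
  obtain ⟨v, hv, hcv⟩ := h _ hδ
  rw [Metric.cauchySeq_iff] at hcv
  obtain ⟨N, hN⟩ := hcv (ε/2) (by positivity)
  refine ⟨N, fun m hm n hn => ?_⟩
  have key : ∀ j, |⟪c j, u - v⟫| ≤ ε/4 := by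
    intro j
    have h1 : |⟪c j, u - v⟫| ≤ ‖c j‖ * ‖u - v‖ := abs_real_inner_le_norm _ _
    have h2 : ‖c j‖ * ‖u - v‖ ≤ M * (ε / (4*(M+1))) := by
      apply mul_le_mul (hM j) hv.le (norm_nonneg _) hM0
    have h3 : M * (ε / (4*(M+1))) ≤ ε/4 := by
      rw [mul_div_assoc'] at *
      rw [div_le_div_iff₀ (by positivity) (by positivity : (0:ℝ) < 4)]
      nlinarith
    linarith
  have hNd := hN m hm n hn
  rw [Real.dist_eq] at *
  have expand : ⟪c m, u⟫ - ⟪c n, u⟫ =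
      ⟪c m, u - v⟫ - ⟪c n, u - v⟫ + (⟪c m, v⟫ - ⟪c n, v⟫) := by
    simp [inner_sub_right]; ring
  rw [expand]
  calc |⟪c m, u - v⟫ - ⟪c n, u - v⟫ + (⟪c m, v⟫ - ⟪c n, v⟫)|
      ≤ |⟪c m, u - v⟫| + |⟪c n, u - v⟫| + |⟪c m, v⟫ - ⟪c n, v⟫| := by
        have := abs_add_le (⟪c m, u - v⟫ - ⟪c n, u - v⟫) (⟪c m, v⟫ - ⟪c n, v⟫)
        have := abs_sub (⟪c m, u - v⟫) (⟪c n, u - v⟫)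
        linarith [abs_sub_abs_le_abs_sub (⟪c m, u-v⟫) (⟪c n, u-v⟫), abs_sub (⟪c m, u - v⟫) (⟪c n, u - v⟫)]
    _ < ε := by linarith [key m, key n]

/-- weak sequential compactness of bounded sequences in a Hilbert space -/
theorem stmt16_weak_subseq (x : ℕ → H) (M : ℝ) (hM : ∀ k, ‖x k‖ ≤ M) :
    ∃ (xhat : H) (φ : ℕ → ℕ), StrictMono φ ∧
      ∀ u : H, Tendsto (fun j => ⟪x (φ j), u⟫) atTop (nhds ⟪xhat, u⟫) := by
  set T : ℕ → ℕ → ℝ := fun k n => ⟪x k, x n⟫ with hTdef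
  have hK : IsCompact (Set.univ.pi fun _ : ℕ => Set.Icc (-(M*M)) (M*M)) :=
    isCompact_univ_pi fun _ => isCompact_Icc
  have hmem : ∀ k, T k ∈ (Set.univ.pi fun _ : ℕ => Set.Icc (-(M*M)) (M*M)) := by
    intro k n _
    have h1 : |⟪x k, x n⟫| ≤ ‖x k‖ * ‖x n‖ := abs_real_inner_le_norm _ _
    have h2 : ‖x k‖ * ‖x n‖ ≤ M * M :=
      mul_le_mul (hM k) (hM n) (norm_nonneg _) (le_trans (norm_nonneg _) (hM 0))
    have := abs_le.1 (le_trans h1 h2)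
    exact ⟨this.1, this.2⟩
  obtain ⟨f, -, φ, hφ, hlim⟩ := hK.tendsto_subseq hmem
  have hcomp : ∀ n, Tendsto (fun j => ⟪x (φ j), x n⟫) atTop (nhds (f n)) := by
    intro n
    exact (tendsto_pi_nhds.1 hlim) n
  have hQ : ∀ u : H, ∃ c : ℝ, Tendsto (fun j => ⟪x (φ j), u⟫) atTop (nhds c) := by
    have hMφ : ∀ j, ‖x (φ j)‖ ≤ M := fun j => hM _
    set S := (Submodule.span ℝ (Set.range x)).topologicalClosure with hS
    have hQspan : ∀ u ∈ Submodule.span ℝ (Set.range x),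
        ∃ c : ℝ, Tendsto (fun j => ⟪x (φ j), u⟫) atTop (nhds c) := by
      intro u hu
      induction hu using Submodule.span_induction with
      | mem v hv => obtain ⟨n, rfl⟩ := hv; exact ⟨f n, hcomp n⟩
      | zero => exact ⟨0, by simpa using tendsto_const_nhds⟩
      | add v w _ _ hv hw =>
          obtain ⟨cv, hcv⟩ := hv; obtain ⟨cw, hcw⟩ := hw
          exact ⟨cv + cw, by simpa [inner_add_right] using hcv.add hcw⟩
      | smul a v _ hv =>
          obtain ⟨cv, hcv⟩ := hv
          exact ⟨a * cv, by simpa [real_inner_smul_right] using hcv.const_mul a⟩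
    have hQS : ∀ u ∈ S, ∃ c : ℝ, Tendsto (fun j => ⟪x (φ j), u⟫) atTop (nhds c) := by
      intro u hu
      have hu' : u ∈ closure (Submodule.span ℝ (Set.range x) : Set H) := hu
      have hcs : CauchySeq (fun j => ⟪x (φ j), u⟫) := by
        apply stmt16_cauchy_approx _ M hMφ
        intro ε hε
        obtain ⟨v, hv, hvd⟩ := Metric.mem_closure_iff.1 hu' ε hε
        refine ⟨v, by rwa [← dist_eq_norm], ?_⟩
        exact (hQspan v hv).choose_spec.cauchySeq
      exact cauchySeq_tendsto_of_complete hcs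
    haveI : CompleteSpace S := by
      have : IsClosed (S : Set H) := Submodule.isClosed_topologicalClosure _
      exact this.completeSpace_coe
    intro u
    obtain ⟨a, ha, b', hb', rfl⟩ := S.exists_add_mem_mem_orthogonal u
    obtain ⟨ca, hca⟩ := hQS a ha
    have hb0 : ∀ j, ⟪x (φ j), b'⟫ = 0 := by
      intro j
      have hxS : x (φ j) ∈ S :=
        Submodule.le_topologicalClosure _ (Submodule.subset_span ⟨φ j, rfl⟩)
      exact (Submodule.mem_orthogonal S b').1 hb' _ hxS
    refine ⟨ca, ?_⟩
    have : (fun j => ⟪x (φ j), a + b'⟫) = fun j => ⟪x (φ j), a⟫ := by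
      funext j; rw [inner_add_right, hb0 j, add_zero]
    rw [this]; exact hca
  choose g hg using hQ
  have gadd : ∀ u v : H, g (u + v) = g u + g v := by
    intro u v
    refine tendsto_nhds_unique (hg (u+v)) ?_
    simpa [inner_add_right] using (hg u).add (hg v)
  have gsmul : ∀ (a : ℝ) (u : H), g (a • u) = a * g u := by
    intro a u
    refine tendsto_nhds_unique (hg (a • u)) ?_
    simpa [real_inner_smul_right] using (hg u).const_mul a
  have gbound : ∀ u : H, |g u| ≤ M * ‖u‖ := by
    intro u
    have h1 : ∀ j, |⟪x (φ j), u⟫| ≤ M * ‖u‖ := fun j =>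
      le_trans (abs_real_inner_le_norm _ _)
        (mul_le_mul_of_nonneg_right (hM _) (norm_nonneg _))
    have h2 : Tendsto (fun j => |⟪x (φ j), u⟫|) atTop (nhds |g u|) := (hg u).abs
    exact le_of_tendsto h2 (Eventually.of_forall h1)
  let ℓ : H →L[ℝ] ℝ := LinearMap.mkContinuous
    { toFun := g, map_add' := gadd, map_smul' := gsmul } M
    (fun u => by simpa using gbound u)
  refine ⟨(InnerProductSpace.toDual ℝ H).symm ℓ, φ, hφ, ?_⟩
  intro u
  have : ⟪(InnerProductSpace.toDual ℝ H).symm ℓ, u⟫ = ℓ u := by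
    rw [← InnerProductSpace.toDual_apply_apply]
    simp
  rw [this]
  exact hg u

/-- the key one-step estimate of the projection-contraction method -/
theorem stmt16_key (C : Set H)
    (P : H → H) (hPmem : ∀ u : H, P u ∈ C)
    (hPchar : ∀ u : H, ∀ c ∈ C, ⟪u - P u, c - P u⟫ ≤ 0)
    (F : H → H) (hmono : ∀ u v : H, 0 ≤ ⟪F u - F v, u - v⟫)
    (ν γ : ℝ) (hν : ν ∈ Set.Ioo (0 : ℝ) 1) (hγ : γ ∈ Set.Ioo (0 : ℝ) 2)
    (x y w : ℕ → H) (β : ℕ → ℝ) (d : ℕ → H) (ρ : ℕ → ℝ)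
    (hβpos : ∀ k, 0 < β k)
    (hy : ∀ k, y k = P (w k - β k • F (w k)))
    (hstep : ∀ k, β k * ‖F (w k) - F (y k)‖ ≤ ν * ‖w k - y k‖)
    (hd : ∀ k, d k = (w k - y k) - β k • (F (w k) - F (y k)))
    (hdne : ∀ k, d k ≠ 0)
    (hρ : ∀ k, ρ k = ⟪w k - y k, d k⟫ / ‖d k‖ ^ 2)
    (hx : ∀ k, x (k + 1) = w k - (γ * ρ k) • d k)
    (q : H) (hqC : q ∈ C) (hqS : ∀ z ∈ C, 0 ≤ ⟪F q, z - q⟫) (k : ℕ) :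
    ‖x (k+1) - q‖^2 ≤ ‖w k - q‖^2
      - (γ * (2 - γ) * ((1-ν)/(1+ν))^2) * ‖w k - y k‖^2 := by
  obtain ⟨hν0, hν1⟩ := hν
  obtain ⟨hγ0, hγ2⟩ := hγ
  have hβ := hβpos k
  have hwyne : (0:ℝ) < ‖w k - y k‖ := by
    rcases eq_or_lt_of_le (norm_nonneg (w k - y k)) with h | h
    · exfalso
      have hwy : w k - y k = 0 := norm_eq_zero.1 h.symm
      have hF : F (w k) - F (y k) = 0 := by
        have h1 := hstep k
        rw [← h] at h1
        have h2 : β k * ‖F (w k) - F (y k)‖ ≤ 0 := by linarith [h1]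
        have h3 : ‖F (w k) - F (y k)‖ ≤ 0 := by nlinarith [norm_nonneg (F (w k) - F (y k))]
        exact norm_eq_zero.1 (le_antisymm h3 (norm_nonneg _))
      apply hdne k
      rw [hd k, hwy, hF]
      simp
    · exact h
  have hwdI : (1-ν) * ‖w k - y k‖^2 ≤ ⟪w k - y k, d k⟫ := by
    have hexp : ⟪w k - y k, d k⟫
        = ‖w k - y k‖^2 - β k * ⟪w k - y k, F (w k) - F (y k)⟫ := by
      rw [hd k, inner_sub_right, real_inner_smul_right, real_inner_self_eq_norm_sq]
    have hcs : ⟪w k - y k, F (w k) - F (y k)⟫ ≤ ‖w k - y k‖ * ‖F (w k) - F (y k)‖ :=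
      real_inner_le_norm _ _
    have hb2 : β k * ⟪w k - y k, F (w k) - F (y k)⟫ ≤ ν * ‖w k - y k‖^2 := by
      calc β k * ⟪w k - y k, F (w k) - F (y k)⟫
          ≤ β k * (‖w k - y k‖ * ‖F (w k) - F (y k)‖) := by
            exact mul_le_mul_of_nonneg_left hcs hβ.le
        _ = (β k * ‖F (w k) - F (y k)‖) * ‖w k - y k‖ := by ring
        _ ≤ (ν * ‖w k - y k‖) * ‖w k - y k‖ :=
            mul_le_mul_of_nonneg_right (hstep k) (norm_nonneg _)
        _ = ν * ‖w k - y k‖^2 := by ring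
    rw [hexp]; linarith
  have hdnorm : ‖d k‖ ≤ (1+ν) * ‖w k - y k‖ := by
    calc ‖d k‖ ≤ ‖w k - y k‖ + ‖β k • (F (w k) - F (y k))‖ := by
          rw [hd k]; exact norm_sub_le _ _
      _ = ‖w k - y k‖ + β k * ‖F (w k) - F (y k)‖ := by
          rw [norm_smul, Real.norm_eq_abs, abs_of_pos hβ]
      _ ≤ ‖w k - y k‖ + ν * ‖w k - y k‖ := by linarith [hstep k]
      _ = (1+ν) * ‖w k - y k‖ := by ring
  have hdpos : (0:ℝ) < ‖d k‖ := norm_pos_iff.2 (hdne k)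
  have hIpos : (0:ℝ) < ⟪w k - y k, d k⟫ := by
    have h0 : (0:ℝ) < (1-ν) * ‖w k - y k‖^2 :=
      mul_pos (by linarith) (pow_pos hwyne 2)
    linarith
  have hρval : ρ k * ‖d k‖^2 = ⟪w k - y k, d k⟫ := by
    rw [hρ k]; field_simp
  have hρpos : 0 < ρ k := by
    rw [hρ k]; positivity
  have hproj : ⟪(w k - β k • F (w k)) - y k, q - y k⟫ ≤ 0 := by
    have := hPchar (w k - β k • F (w k)) q hqC
    rwa [← hy k] at this
  have hyC : y k ∈ C := by rw [hy k]; exact hPmem _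
  have hyqd : 0 ≤ ⟪y k - q, d k⟫ := by
    have hdalt : d k = ((w k - β k • F (w k)) - y k) + β k • F (y k) := by
      rw [hd k, smul_sub]; abel
    have e1 : ⟪y k - q, d k⟫
        = ⟪w k - β k • F (w k) - y k, y k - q⟫ + β k * ⟪F (y k), y k - q⟫ := by
      rw [hdalt, inner_add_right, real_inner_smul_right]
      simp only [real_inner_comm (y k - q)]
    have g1 : 0 ≤ ⟪w k - β k • F (w k) - y k, y k - q⟫ := by
      have e2 : ⟪w k - β k • F (w k) - y k, y k - q⟫
          = -⟪w k - β k • F (w k) - y k, q - y k⟫ := by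
        rw [show y k - q = -(q - y k) from by abel, inner_neg_right]
      rw [e2]; linarith [hproj]
    have g2 : 0 ≤ ⟪F (y k), y k - q⟫ := by
      have s := hqS (y k) hyC
      have e3 : ⟪F (y k), y k - q⟫ = ⟪F (y k) - F q, y k - q⟫ + ⟪F q, y k - q⟫ := by
        rw [inner_sub_left]; ring
      rw [e3]
      have m' : (0:ℝ) ≤ ⟪F (y k) - F q, y k - q⟫ := hmono _ _
      linarith
    rw [e1]
    have := mul_nonneg hβ.le g2
    linarith
  have hiter : x (k+1) - q = (w k - q) - (γ * ρ k) • d k := by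
    rw [hx k]; abel
  have hexp2 : ‖x (k+1) - q‖^2
      = ‖w k - q‖^2 - 2*(γ * ρ k)*⟪w k - q, d k⟫ + (γ * ρ k)^2 * ‖d k‖^2 := by
    rw [hiter, norm_sub_sq_real, real_inner_smul_right, norm_smul,
      Real.norm_eq_abs, mul_pow, sq_abs]
    ring
  have hsplit2 : ⟪w k - q, d k⟫ = ⟪w k - y k, d k⟫ + ⟪y k - q, d k⟫ := by
    rw [← inner_add_left]
    congr 1
    abel
  have hwqd : ρ k * ‖d k‖^2 ≤ ⟪w k - q, d k⟫ := by
    rw [hsplit2, hρval]; linarith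
  have key1 : ‖x (k+1) - q‖^2 ≤ ‖w k - q‖^2 - γ*(2-γ)*(ρ k^2 * ‖d k‖^2) := by
    rw [hexp2]
    nlinarith [mul_le_mul_of_nonneg_left hwqd (by positivity : (0:ℝ) ≤ 2*(γ*ρ k)),
      mul_pos hγ0 hρpos]
  have key2 : ((1-ν)/(1+ν))^2 * ‖w k - y k‖^2 ≤ ρ k^2 * ‖d k‖^2 := by
    have hId : ρ k^2 * ‖d k‖^2 = ⟪w k - y k, d k⟫^2 / ‖d k‖^2 := by
      rw [hρ k]; field_simp
    rw [hId, le_div_iff₀ (by positivity : (0:ℝ) < ‖d k‖^2)]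
    have hD2 : ‖d k‖^2 ≤ (1+ν)^2 * ‖w k - y k‖^2 := by
      nlinarith [norm_nonneg (d k)]
    have ha0 : (0:ℝ) ≤ (1-ν) * ‖w k - y k‖^2 := by nlinarith [sq_nonneg ‖w k - y k‖]
    calc ((1-ν)/(1+ν))^2 * ‖w k - y k‖^2 * ‖d k‖^2
        ≤ ((1-ν)/(1+ν))^2 * ‖w k - y k‖^2 * ((1+ν)^2 * ‖w k - y k‖^2) := by
          exact mul_le_mul_of_nonneg_left hD2 (by positivity)
      _ = (1-ν)^2 * (‖w k - y k‖^2)^2 := by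
          field_simp
      _ ≤ ⟪w k - y k, d k⟫^2 := by nlinarith [mul_self_le_mul_self ha0 hwdI]
  have hpos : (0:ℝ) < γ*(2-γ) := by nlinarith
  have := mul_le_mul_of_nonneg_left key2 hpos.le
  linarith

end Aux
/-- `xm k` plays the role of `x^{k-1}` (with `xm 0` the arbitrary starting point `x^{-1}`). -/
theorem stmt_16 {H : Type*} [NormedAddCommGroup H] [InnerProductSpace ℝ H]
    [CompleteSpace H]
    (C : Set H) (hCne : C.Nonempty) (hCcl : IsClosed C) (hCcv : Convex ℝ C)
    (P : H → H) (hPmem : ∀ u : H, P u ∈ C)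
    (hPchar : ∀ u : H, ∀ c ∈ C, ⟪u - P u, c - P u⟫ ≤ 0)
    (F : H → H) (hmono : ∀ u v : H, 0 ≤ ⟪F u - F v, u - v⟫)
    (L : ℝ) (hL : 0 < L) (hLip : ∀ u v : H, ‖F u - F v‖ ≤ L * ‖u - v‖)
    (hSOL : ∃ p ∈ C, ∀ z ∈ C, 0 ≤ ⟪F p, z - p⟫)
    (ν γ : ℝ) (hν : ν ∈ Set.Ioo (0 : ℝ) 1) (hγ : γ ∈ Set.Ioo (0 : ℝ) 2)
    (α : ℕ → ℝ) (hα : ∀ k, α k ∈ Set.Icc (0 : ℝ) 1)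
    (x xm y w : ℕ → H) (β : ℕ → ℝ) (d : ℕ → H) (ρ : ℕ → ℝ)
    (hxm : ∀ k, xm (k + 1) = x k)
    (hw : ∀ k, w k = x k + α k • (x k - xm k))
    (hβpos : ∀ k, 0 < β k) (hβinf : ∃ b > (0 : ℝ), ∀ k, b ≤ β k)
    (hy : ∀ k, y k = P (w k - β k • F (w k)))
    (hstep : ∀ k, β k * ‖F (w k) - F (y k)‖ ≤ ν * ‖w k - y k‖)
    (hd : ∀ k, d k = (w k - y k) - β k • (F (w k) - F (y k)))
    (hdne : ∀ k, d k ≠ 0)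
    (hρ : ∀ k, ρ k = ⟪w k - y k, d k⟫ / ‖d k‖ ^ 2)
    (hx : ∀ k, x (k + 1) = w k - (γ * ρ k) • d k)
    (hsum : Summable (fun k => α k * ‖x k - xm k‖)) :
    ∃ xhat, (xhat ∈ C ∧ ∀ z ∈ C, 0 ≤ ⟪F xhat, z - xhat⟫) ∧
      ∀ u : H, Filter.Tendsto (fun k => ⟪x k, u⟫) Filter.atTop (nhds ⟪xhat, u⟫) := by
  obtain ⟨p, hpC, hpS⟩ := hSOL
  obtain ⟨b, hb, hβb⟩ := hβinf
  have hc0 : 0 < γ * (2 - γ) * ((1-ν)/(1+ν))^2 := by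
    obtain ⟨hν0, hν1⟩ := hν; obtain ⟨hγ0, hγ2⟩ := hγ
    have : (0:ℝ) < (1-ν)/(1+ν) := div_pos (by linarith) (by linarith)
    have : (0:ℝ) < γ * (2-γ) := by nlinarith
    positivity
  set ε : ℕ → ℝ := fun k => α k * ‖x k - xm k‖ with hεdef
  have hε0 : ∀ k, 0 ≤ ε k := fun k => mul_nonneg (hα k).1 (norm_nonneg _)
  have hεlim : Filter.Tendsto ε Filter.atTop (nhds 0) := hsum.tendsto_atTop_zero
  have key := fun q hqC hqS k => stmt16_key C P hPmem hPchar F hmono ν γ hν hγ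
    x y w β d ρ hβpos hy hstep hd hdne hρ hx q hqC hqS k
  have hwq : ∀ (q : H) (k : ℕ), ‖w k - q‖ ≤ ‖x k - q‖ + ε k := by
    intro q k
    have h1 : w k - q = (x k - q) + α k • (x k - xm k) := by rw [hw k]; abel
    rw [h1]
    refine le_trans (norm_add_le _ _) ?_
    rw [norm_smul, Real.norm_eq_abs, abs_of_nonneg (hα k).1]
  have habs : ∀ {A B : ℝ}, 0 ≤ A → 0 ≤ B → A^2 ≤ B^2 → A ≤ B := by
    intro A B hA hB h; nlinarith
  have hqf : ∀ q ∈ C, (∀ z ∈ C, 0 ≤ ⟪F q, z - q⟫) →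
      ∀ k, ‖x (k+1) - q‖ ≤ ‖x k - q‖ + ε k := by
    intro q hqC hqS k
    have h1 := key q hqC hqS k
    have h2 := hwq q k
    have h3 : 0 ≤ γ * (2 - γ) * ((1-ν)/(1+ν))^2 * ‖w k - y k‖^2 :=
      mul_nonneg hc0.le (sq_nonneg _)
    have h4 : ‖x (k+1) - q‖ ≤ ‖w k - q‖ :=
      habs (norm_nonneg _) (norm_nonneg _) (by linarith)
    linarith
  have hlimq : ∀ q ∈ C, (∀ z ∈ C, 0 ≤ ⟪F q, z - q⟫) →
      ∃ ℓ, Filter.Tendsto (fun k => ‖x k - q‖) Filter.atTop (nhds ℓ) := by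
    intro q hqC hqS
    exact stmt16_qfejer _ ε (fun k => norm_nonneg _) hε0 hsum (hqf q hqC hqS)
  obtain ⟨ℓp, hℓp⟩ := hlimq p hpC hpS
  -- boundedness of x
  obtain ⟨Mp, hMp⟩ := hℓp.bddAbove_range
  have hMx : ∀ k, ‖x k‖ ≤ Mp + ‖p‖ := by
    intro k
    have h1 : ‖x k - p‖ ≤ Mp := hMp ⟨k, rfl⟩
    have := norm_add_le (x k - p) p
    simpa using le_trans (by simpa using this) (by linarith)
  -- ‖w k - y k‖ → 0
  have hwy0 : Filter.Tendsto (fun k => ‖w k - y k‖) Filter.atTop (nhds 0) := by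
    have hup : ∀ k, γ * (2 - γ) * ((1-ν)/(1+ν))^2 * ‖w k - y k‖^2 ≤ (‖x k - p‖ + ε k)^2 - ‖x (k+1) - p‖^2 := by
      intro k
      have h1 := key p hpC hpS k
      have h2 := hwq p k
      have h3 : ‖w k - p‖^2 ≤ (‖x k - p‖ + ε k)^2 := by
        have h0 : (0:ℝ) ≤ ‖x k - p‖ + ε k := add_nonneg (norm_nonneg _) (hε0 k)
        nlinarith [norm_nonneg (w k - p)]
      linarith
    have hR : Filter.Tendsto (fun k => (‖x k - p‖ + ε k)^2 - ‖x (k+1) - p‖^2)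
        Filter.atTop (nhds 0) := by
      have l1 : Filter.Tendsto (fun k => ‖x (k+1) - p‖) Filter.atTop (nhds ℓp) :=
        hℓp.comp (Filter.tendsto_add_atTop_nat 1)
      have := ((hℓp.add hεlim).pow 2).sub (l1.pow 2)
      simpa using this
    have hsq : Filter.Tendsto (fun k => γ * (2 - γ) * ((1-ν)/(1+ν))^2 * ‖w k - y k‖^2) Filter.atTop (nhds 0) :=
      squeeze_zero (fun k => mul_nonneg hc0.le (sq_nonneg _)) hup hR
    have hsq2 : Filter.Tendsto (fun k => ‖w k - y k‖^2) Filter.atTop (nhds 0) := by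
      have h5 := hsq.const_mul (1/(γ * (2 - γ) * ((1-ν)/(1+ν))^2))
      have h6 : (fun k => (1/(γ * (2 - γ) * ((1-ν)/(1+ν))^2)) * (γ * (2 - γ) * ((1-ν)/(1+ν))^2 * ‖w k - y k‖^2)) = fun k => ‖w k - y k‖^2 := by
        funext k; rw [← mul_assoc, one_div_mul_cancel hc0.ne', one_mul]
      rw [h6] at h5; simpa using h5
    have h7 := hsq2.sqrt
    have h8 : (fun k => Real.sqrt (‖w k - y k‖^2)) = fun k => ‖w k - y k‖ := by
      funext k; exact Real.sqrt_sq (norm_nonneg _)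
    rw [h8] at h7; simpa using h7
  -- ‖y k - x k‖ → 0
  have hwx : ∀ k, ‖w k - x k‖ = ε k := by
    intro k
    rw [hw k, add_sub_cancel_left, norm_smul, Real.norm_eq_abs, abs_of_nonneg (hα k).1]
  have hyx0 : Filter.Tendsto (fun k => ‖y k - x k‖) Filter.atTop (nhds 0) := by
    have hb1 : ∀ k, ‖y k - x k‖ ≤ ‖w k - y k‖ + ε k := by
      intro k
      calc ‖y k - x k‖ = ‖(w k - x k) - (w k - y k)‖ := by congr 1; abel
        _ ≤ ‖w k - x k‖ + ‖w k - y k‖ := norm_sub_le _ _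
        _ = ‖w k - y k‖ + ε k := by rw [hwx k]; ring
    have := hwy0.add hεlim
    refine squeeze_zero (fun k => norm_nonneg _) hb1 (by simpa using this)
  -- bound for y
  obtain ⟨My, hMy⟩ := hyx0.bddAbove_range
  -- cluster points of x are solutions
  have hclus : ∀ (z : H) (ψ : ℕ → ℕ), StrictMono ψ →
      (∀ u : H, Filter.Tendsto (fun j => ⟪x (ψ j), u⟫) Filter.atTop (nhds ⟪z, u⟫)) →
      z ∈ C ∧ ∀ v ∈ C, 0 ≤ ⟪F z, v - z⟫ := by
    intro z ψ hψ hweak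
    have hpsiinf : Filter.Tendsto ψ Filter.atTop Filter.atTop := hψ.tendsto_atTop
    have hyweak : ∀ u : H, Filter.Tendsto (fun j => ⟪y (ψ j), u⟫) Filter.atTop (nhds ⟪z, u⟫) := by
      intro u
      have h1 : Filter.Tendsto (fun j => ⟪y (ψ j) - x (ψ j), u⟫) Filter.atTop (nhds 0) := by
        apply squeeze_zero_norm (a := fun j => ‖y (ψ j) - x (ψ j)‖ * ‖u‖)
        · intro j
          exact abs_real_inner_le_norm _ _
        · have := (hyx0.comp hpsiinf).mul_const ‖u‖
          simpa using this
      have h2 := (hweak u).add h1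
      have h3 : (fun j => ⟪x (ψ j), u⟫ + ⟪y (ψ j) - x (ψ j), u⟫)
          = fun j => ⟪y (ψ j), u⟫ := by
        funext j; rw [← inner_add_left]; congr 1; abel
      rw [h3] at h2; simpa using h2
    have hyC : ∀ k, y k ∈ C := fun k => by rw [hy k]; exact hPmem _
    have hzC : z ∈ C := by
      have hchar := fun j => hPchar z (y (ψ j)) (hyC (ψ j))
      have hlim2 : Filter.Tendsto (fun j => ⟪z - P z, y (ψ j) - P z⟫)
          Filter.atTop (nhds ⟪z - P z, z - P z⟫) := by
        have e : ∀ j, ⟪z - P z, y (ψ j) - P z⟫ = ⟪y (ψ j), z - P z⟫ - ⟪z - P z, P z⟫ := by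
          intro j
          rw [inner_sub_right, real_inner_comm (y (ψ j))]
        have e2 : ⟪z - P z, z - P z⟫ = ⟪z, z - P z⟫ - ⟪z - P z, P z⟫ := by
          rw [inner_sub_left]
          rw [real_inner_comm (P z) (z - P z)]
        simp only [e, e2]
        exact (hyweak (z - P z)).sub tendsto_const_nhds
      have hle : ⟪z - P z, z - P z⟫ ≤ 0 :=
        le_of_tendsto hlim2 (Filter.Eventually.of_forall hchar)
      have : z - P z = 0 := by
        have := real_inner_self_nonneg (x := z - P z)
        exact inner_self_eq_zero.1 (le_antisymm hle this)
      have hzP : z = P z := by rwa [sub_eq_zero] at this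
      rw [hzP]; exact hPmem z
    refine ⟨hzC, ?_⟩
    -- Minty argument
    have hMinty : ∀ v ∈ C, 0 ≤ ⟪F v, v - z⟫ := by
      intro v hvC
      have hBv : ∀ k, ‖v - y k‖ ≤ ‖v‖ + (My + (Mp + ‖p‖)) := by
        intro k
        have h1 : ‖y k - x k‖ ≤ My := hMy ⟨k, rfl⟩
        have h2 := hMx k
        calc ‖v - y k‖ ≤ ‖v‖ + ‖y k‖ := norm_sub_le _ _
          _ = ‖v‖ + ‖(y k - x k) + x k‖ := by rw [sub_add_cancel]
          _ ≤ ‖v‖ + (‖y k - x k‖ + ‖x k‖) := by linarith [norm_add_le (y k - x k) (x k)]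
          _ ≤ ‖v‖ + (My + (Mp + ‖p‖)) := by linarith
      have hlower : ∀ k, -((1 + b*L) * (‖w k - y k‖ * (‖v‖ + (My + (Mp + ‖p‖)))))
          ≤ b * ⟪F v, v - y k⟫ := by
        intro k
        have hβk := hβpos k
        have hbk := hβb k
        have hproj : ⟪(w k - β k • F (w k)) - y k, v - y k⟫ ≤ 0 := by
          have := hPchar (w k - β k • F (w k)) v hvC
          rwa [← hy k] at this
        have s1 : ⟪w k - y k, v - y k⟫ ≤ β k * ⟪F (w k), v - y k⟫ := by
          have e : ⟪(w k - β k • F (w k)) - y k, v - y k⟫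
              = ⟪w k - y k, v - y k⟫ - β k * ⟪F (w k), v - y k⟫ := by
            rw [show (w k - β k • F (w k)) - y k = (w k - y k) - β k • F (w k) from by abel,
              inner_sub_left, real_inner_smul_left]
          linarith [hproj, e ▸ hproj]
        have s2 : -(‖w k - y k‖ * ‖v - y k‖) ≤ ⟪w k - y k, v - y k⟫ := by
          have := abs_real_inner_le_norm (w k - y k) (v - y k)
          have := abs_le.1 this
          linarith [this.1]
        have s3 : ⟪F (w k) - F (y k), v - y k⟫ ≤ L * ‖w k - y k‖ * ‖v - y k‖ := by
          calc ⟪F (w k) - F (y k), v - y k⟫ ≤ ‖F (w k) - F (y k)‖ * ‖v - y k‖ :=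
                real_inner_le_norm _ _
            _ ≤ (L * ‖w k - y k‖) * ‖v - y k‖ :=
                mul_le_mul_of_nonneg_right (hLip _ _) (norm_nonneg _)
            _ = L * ‖w k - y k‖ * ‖v - y k‖ := by ring
        have s4 : ⟪F (y k), v - y k⟫ = ⟪F (w k), v - y k⟫ - ⟪F (w k) - F (y k), v - y k⟫ := by
          rw [inner_sub_left]; ring
        have s5 : ⟪F (y k), v - y k⟫ ≤ ⟪F v, v - y k⟫ := by
          have := hmono v (y k)
          have e : ⟪F v - F (y k), v - y k⟫ = ⟪F v, v - y k⟫ - ⟪F (y k), v - y k⟫ := by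
            rw [inner_sub_left]
          linarith [e ▸ hmono v (y k)]
        -- combine
        have t0 : (0:ℝ) ≤ ‖w k - y k‖ * ‖v - y k‖ :=
          mul_nonneg (norm_nonneg _) (norm_nonneg _)
        have hbw : b * ⟪F (w k), v - y k⟫ ≥ -(‖w k - y k‖ * ‖v - y k‖) := by
          rcases le_or_gt 0 (⟪F (w k), v - y k⟫) with hc | hc
          · nlinarith
          · nlinarith [mul_le_mul_of_nonpos_right hbk hc.le]
        have hvyb : ‖v - y k‖ ≤ ‖v‖ + (My + (Mp + ‖p‖)) := hBv k
        have hwynn : (0:ℝ) ≤ ‖w k - y k‖ := norm_nonneg _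
        have hcoef : (0:ℝ) ≤ 1 + b*L := by nlinarith
        have hprod : (1 + b*L) * (‖w k - y k‖ * ‖v - y k‖)
            ≤ (1 + b*L) * (‖w k - y k‖ * (‖v‖ + (My + (Mp + ‖p‖)))) :=
          mul_le_mul_of_nonneg_left (mul_le_mul_of_nonneg_left hvyb hwynn) hcoef
        have hs5b : b * ⟪F (y k), v - y k⟫ ≤ b * ⟪F v, v - y k⟫ :=
          mul_le_mul_of_nonneg_left s5 hb.le
        have hs3b : b * ⟪F (w k) - F (y k), v - y k⟫ ≤ b * (L * ‖w k - y k‖ * ‖v - y k‖) :=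
          mul_le_mul_of_nonneg_left s3 hb.le
        have hs4b : b * ⟪F (y k), v - y k⟫
            = b * ⟪F (w k), v - y k⟫ - b * ⟪F (w k) - F (y k), v - y k⟫ := by
          rw [s4]; ring
        nlinarith [hprod, hbw, hs3b, hs4b, hs5b]
      -- pass to the limit along ψ
      have hlow0 : Filter.Tendsto
          (fun j => -((1 + b*L) * (‖w (ψ j) - y (ψ j)‖ * (‖v‖ + (My + (Mp + ‖p‖))))))
          Filter.atTop (nhds 0) := by
        have := ((hwy0.comp hpsiinf).mul_const (‖v‖ + (My + (Mp + ‖p‖)))).const_mul (1 + b*L)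
        have h0 := this.neg
        simpa using h0
      have hFlim : Filter.Tendsto (fun j => b * ⟪F v, v - y (ψ j)⟫)
          Filter.atTop (nhds (b * ⟪F v, v - z⟫)) := by
        have e : ∀ j, ⟪F v, v - y (ψ j)⟫ = ⟪F v, v⟫ - ⟪y (ψ j), F v⟫ := by
          intro j; rw [inner_sub_right, real_inner_comm (y (ψ j))]
        have e2 : ⟪F v, v - z⟫ = ⟪F v, v⟫ - ⟪z, F v⟫ := by
          rw [inner_sub_right, real_inner_comm z]
        simp only [e, e2]
        exact ((tendsto_const_nhds.sub (hyweak (F v)))).const_mul b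
      have hge : 0 ≤ b * ⟪F v, v - z⟫ :=
        le_of_tendsto_of_tendsto' hlow0 hFlim (fun j => hlower (ψ j))
      nlinarith
    -- Minty ⇒ VI at z
    intro v hvC
    have hzn : ∀ n : ℕ, z + ((1:ℝ)/(n+1)) • (v - z) ∈ C := by
      intro n
      have ht0 : (0:ℝ) ≤ 1/(n+1) := by positivity
      have ht1 : (1:ℝ)/(n+1) ≤ 1 := by
        rw [div_le_one (by positivity)]
        have : (1:ℝ) ≤ (n:ℝ) + 1 := by
          have := Nat.cast_nonneg (α := ℝ) n; linarith
        linarith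
      have := hCcv hzC hvC (by linarith : (0:ℝ) ≤ 1 - 1/(n+1)) ht0 (by ring)
      have e : (1 - 1/((n:ℝ)+1)) • z + (1/((n:ℝ)+1)) • v = z + ((1:ℝ)/(n+1)) • (v - z) := by
        rw [smul_sub, sub_smul, one_smul]; abel
      rwa [e] at this
    have hn : ∀ n : ℕ, 0 ≤ ⟪F (z + ((1:ℝ)/(n+1)) • (v - z)), v - z⟫ := by
      intro n
      have h1 := hMinty _ (hzn n)
      have e : z + ((1:ℝ)/(n+1)) • (v - z) - z = ((1:ℝ)/(n+1)) • (v - z) := by abel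
      rw [e, real_inner_smul_right] at h1
      have ht : (0:ℝ) < 1/(n+1) := by positivity
      nlinarith
    have hFc : Filter.Tendsto (fun n : ℕ => ⟪F (z + ((1:ℝ)/(n+1)) • (v - z)), v - z⟫)
        Filter.atTop (nhds ⟪F z, v - z⟫) := by
      have hdiff : Filter.Tendsto
          (fun n : ℕ => ⟪F (z + ((1:ℝ)/(n+1)) • (v - z)) - F z, v - z⟫)
          Filter.atTop (nhds 0) := by
        apply squeeze_zero_norm (a := fun n : ℕ => (L * ‖v - z‖ * ‖v - z‖) * (1/(n+1)))
        · intro n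
          have h1 : |⟪F (z + ((1:ℝ)/(n+1)) • (v - z)) - F z, v - z⟫|
              ≤ ‖F (z + ((1:ℝ)/(n+1)) • (v - z)) - F z‖ * ‖v - z‖ :=
            abs_real_inner_le_norm _ _
          have h2 : ‖F (z + ((1:ℝ)/(n+1)) • (v - z)) - F z‖
              ≤ L * ‖((1:ℝ)/(n+1)) • (v - z)‖ := by
            have := hLip (z + ((1:ℝ)/(n+1)) • (v - z)) z
            simpa using this
          have h3 : ‖((1:ℝ)/(n+1)) • (v - z)‖ = (1/(n+1)) * ‖v - z‖ := by
            rw [norm_smul, Real.norm_eq_abs, abs_of_nonneg (by positivity : (0:ℝ) ≤ 1/(n+1))]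
          rw [h3] at h2
          calc |⟪F (z + ((1:ℝ)/(n+1)) • (v - z)) - F z, v - z⟫|
              ≤ ‖F (z + ((1:ℝ)/(n+1)) • (v - z)) - F z‖ * ‖v - z‖ := h1
            _ ≤ (L * ((1/(n+1)) * ‖v - z‖)) * ‖v - z‖ :=
                mul_le_mul_of_nonneg_right h2 (norm_nonneg _)
            _ = (L * ‖v - z‖ * ‖v - z‖) * (1/(n+1)) := by ring
        · have := tendsto_one_div_add_atTop_nhds_zero_nat (𝕜 := ℝ)
          have h4 := this.const_mul (L * ‖v - z‖ * ‖v - z‖)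
          simpa using h4
      have e : (fun n : ℕ => ⟪F (z + ((1:ℝ)/(n+1)) • (v - z)), v - z⟫)
          = fun n : ℕ => ⟪F z, v - z⟫ + ⟪F (z + ((1:ℝ)/(n+1)) • (v - z)) - F z, v - z⟫ := by
        funext n; rw [← inner_add_left]; congr 1; abel
      rw [e]
      simpa using (tendsto_const_nhds.add hdiff)
    exact ge_of_tendsto hFc (Filter.Eventually.of_forall hn)
  -- weak cluster point
  obtain ⟨xhat, φ, hφ, hweakφ⟩ := stmt16_weak_subseq x (Mp + ‖p‖) hMx
  obtain ⟨hxhatC, hxhatS⟩ := hclus xhat φ hφ hweakφ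
  refine ⟨xhat, ⟨hxhatC, hxhatS⟩, ?_⟩
  intro u
  by_contra hcon
  -- extract a subsequence staying away from the limit
  rw [Metric.tendsto_atTop] at hcon
  push_neg at hcon
  obtain ⟨ε₀, hε₀, hfreq⟩ := hcon
  have hfreq' : ∃ᶠ n in Filter.atTop, ε₀ ≤ dist ⟪x n, u⟫ ⟪xhat, u⟫ := by
    rw [Filter.frequently_atTop]
    intro N
    obtain ⟨n, hn1, hn2⟩ := hfreq N
    exact ⟨n, hn1, hn2⟩
  obtain ⟨ψ, hψmono, hψprop⟩ := Filter.extraction_of_frequently_atTop hfreq'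
  obtain ⟨xbar, φ₂, hφ₂, hweak₂⟩ := stmt16_weak_subseq (fun j => x (ψ j)) (Mp + ‖p‖)
    (fun j => hMx _)
  have hcomp : StrictMono (fun j => ψ (φ₂ j)) := hψmono.comp hφ₂
  have hweak₂' : ∀ u : H, Filter.Tendsto (fun j => ⟪x (ψ (φ₂ j)), u⟫)
      Filter.atTop (nhds ⟪xbar, u⟫) := hweak₂
  obtain ⟨hxbarC, hxbarS⟩ := hclus xbar (fun j => ψ (φ₂ j)) hcomp hweak₂'
  -- Opial argument
  obtain ⟨ℓ₁, hℓ₁⟩ := hlimq xhat hxhatC hxhatS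
  obtain ⟨ℓ₂, hℓ₂⟩ := hlimq xbar hxbarC hxbarS
  have hid : ∀ k, ‖x k - xhat‖^2
      = ‖x k - xbar‖^2 + 2*⟪x k - xbar, xbar - xhat⟫ + ‖xbar - xhat‖^2 := by
    intro k
    have e : x k - xhat = (x k - xbar) + (xbar - xhat) := by abel
    rw [e, norm_add_sq_real]
  have hinlim : ∀ (ξ : ℕ → ℕ) (zz : H), Filter.Tendsto ξ Filter.atTop Filter.atTop →
      (∀ u : H, Filter.Tendsto (fun j => ⟪x (ξ j), u⟫) Filter.atTop (nhds ⟪zz, u⟫)) →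
      Filter.Tendsto (fun j => ⟪x (ξ j) - xbar, xbar - xhat⟫) Filter.atTop
        (nhds ⟪zz - xbar, xbar - xhat⟫) := by
    intro ξ zz hξ hwk
    have e : ∀ j, ⟪x (ξ j) - xbar, xbar - xhat⟫
        = ⟪x (ξ j), xbar - xhat⟫ - ⟪xbar, xbar - xhat⟫ := by
      intro j; rw [inner_sub_left]
    have e2 : ⟪zz - xbar, xbar - xhat⟫ = ⟪zz, xbar - xhat⟫ - ⟪xbar, xbar - xhat⟫ := by
      rw [inner_sub_left]
    simp only [e, e2]
    exact (hwk (xbar - xhat)).sub tendsto_const_nhds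
  -- limit along φ
  have lim1 : ℓ₁^2 = ℓ₂^2 + 2*⟪xhat - xbar, xbar - xhat⟫ + ‖xbar - xhat‖^2 := by
    have t1 : Filter.Tendsto (fun j => ‖x (φ j) - xhat‖^2) Filter.atTop (nhds (ℓ₁^2)) :=
      ((hℓ₁.comp hφ.tendsto_atTop).pow 2)
    have t2 : Filter.Tendsto (fun j => ‖x (φ j) - xbar‖^2) Filter.atTop (nhds (ℓ₂^2)) :=
      ((hℓ₂.comp hφ.tendsto_atTop).pow 2)
    have t3 := hinlim φ xhat hφ.tendsto_atTop hweakφ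
    have t4 : Filter.Tendsto (fun j => ‖x (φ j) - xbar‖^2
        + 2*⟪x (φ j) - xbar, xbar - xhat⟫ + ‖xbar - xhat‖^2) Filter.atTop
        (nhds (ℓ₂^2 + 2*⟪xhat - xbar, xbar - xhat⟫ + ‖xbar - xhat‖^2)) :=
      (t2.add (t3.const_mul 2)).add tendsto_const_nhds
    have t5 : (fun j => ‖x (φ j) - xhat‖^2) = fun j => ‖x (φ j) - xbar‖^2
        + 2*⟪x (φ j) - xbar, xbar - xhat⟫ + ‖xbar - xhat‖^2 := by
      funext j; exact hid (φ j)
    rw [t5] at t1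
    exact tendsto_nhds_unique t1 t4
  -- limit along ψ ∘ φ₂
  have lim2 : ℓ₁^2 = ℓ₂^2 + 2*⟪xbar - xbar, xbar - xhat⟫ + ‖xbar - xhat‖^2 := by
    have hξ : Filter.Tendsto (fun j => ψ (φ₂ j)) Filter.atTop Filter.atTop :=
      hcomp.tendsto_atTop
    have t1 : Filter.Tendsto (fun j => ‖x (ψ (φ₂ j)) - xhat‖^2) Filter.atTop (nhds (ℓ₁^2)) :=
      ((hℓ₁.comp hξ).pow 2)
    have t2 : Filter.Tendsto (fun j => ‖x (ψ (φ₂ j)) - xbar‖^2) Filter.atTop (nhds (ℓ₂^2)) :=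
      ((hℓ₂.comp hξ).pow 2)
    have t3 := hinlim (fun j => ψ (φ₂ j)) xbar hξ hweak₂'
    have t4 : Filter.Tendsto (fun j => ‖x (ψ (φ₂ j)) - xbar‖^2
        + 2*⟪x (ψ (φ₂ j)) - xbar, xbar - xhat⟫ + ‖xbar - xhat‖^2) Filter.atTop
        (nhds (ℓ₂^2 + 2*⟪xbar - xbar, xbar - xhat⟫ + ‖xbar - xhat‖^2)) :=
      (t2.add (t3.const_mul 2)).add tendsto_const_nhds
    have t5 : (fun j => ‖x (ψ (φ₂ j)) - xhat‖^2) = fun j => ‖x (ψ (φ₂ j)) - xbar‖^2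
        + 2*⟪x (ψ (φ₂ j)) - xbar, xbar - xhat⟫ + ‖xbar - xhat‖^2 := by
      funext j; exact hid _
    rw [t5] at t1
    exact tendsto_nhds_unique t1 t4
  have hxbar_eq : xbar = xhat := by
    have e1 : ⟪xhat - xbar, xbar - xhat⟫ = -‖xbar - xhat‖^2 := by
      rw [show xhat - xbar = -(xbar - xhat) from by abel, inner_neg_left,
        real_inner_self_eq_norm_sq]
    have e2 : ⟪xbar - xbar, xbar - xhat⟫ = 0 := by simp
    rw [e1] at lim1
    rw [e2] at lim2
    have : ‖xbar - xhat‖^2 = 0 := by linarith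
    have h0 : xbar - xhat = 0 := by
      have := pow_eq_zero_iff (n := 2) (by norm_num) |>.1 this
      exact norm_eq_zero.1 this
    rwa [sub_eq_zero] at h0
  -- contradiction
  have hcontr : Filter.Tendsto (fun j => ⟪x (ψ (φ₂ j)), u⟫) Filter.atTop
      (nhds ⟪xhat, u⟫) := by
    rw [← hxbar_eq]; exact hweak₂' u
  rw [Metric.tendsto_atTop] at hcontr
  obtain ⟨N, hN⟩ := hcontr ε₀ hε₀
  exact absurd (hψprop (φ₂ N)) (not_le.2 (hN N le_rfl))
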